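/- Let f : ℝᵖ → ℝ satisfy the bimodal Hessian condition with constants L, μ, κ_+, κ_-, ε and subspace S, and let θ_⋆ be its minimizer. Suppose the period T is an integer with T ≥ 2κ_+·log(2L/(κ_-·μ)) + 1, the cyclical schedule uses η_- = 1/(κ_-·μ) and η_+ = 1/L, and 4ε ≤ min(1, κ_- /T)·μ. Define the gradient iterates θ_{t+1} = θ_t − η_t·∇f(θ_t) starting from θ_0, and set B = max(‖Π_S(θ_0 − θ_⋆)‖, ‖Π_{Sᶜ}(θ_0 − θ_⋆)‖). Then after one full period, max(‖Π_S(θ_T − θ_⋆)‖, ‖Π_{Sᶜ}(θ_T − θ_⋆)‖) ≤ (1 − 1/(4κ_-))·B. -/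

import Mathlib

open scoped RealInnerProductSpace

/-- The orthogonal projection onto a subspace `S` of `ℝᵖ`, as a map `ℝᵖ → ℝᵖ`. -/
noncomputable def projE {p : ℕ} (S : Submodule ℝ (EuclideanSpace ℝ (Fin p)))
    (v : EuclideanSpace ℝ (Fin p)) : EuclideanSpace ℝ (Fin p) :=
  (S.orthogonalProjectionOnto v : EuclideanSpace ℝ (Fin p))

/-- The Hessian of `f : ℝᵖ → ℝ` at `x`, as the derivative of the gradient. -/
noncomputable def hessOp {p : ℕ} (f : EuclideanSpace ℝ (Fin p) → ℝ)
    (x : EuclideanSpace ℝ (Fin p)) :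
    EuclideanSpace ℝ (Fin p) →L[ℝ] EuclideanSpace ℝ (Fin p) :=
  fderiv ℝ (gradient f) x

/-- **Bimodal Hessian condition** (Definition 3): `f` is twice continuously
differentiable, `L`-smooth and `μ`-strongly convex, its Hessian restricted to the
subspace `S` has spectrum in `[L/κ₊, L]`, restricted to `Sᗮ` has spectrum in
`[μ, κ₋·μ]`, and the cross term `Π_S ∇²f(θ) Π_{Sᶜ}` has operator norm at most `ε`. -/
def BimodalHessian {p : ℕ} (f : EuclideanSpace ℝ (Fin p) → ℝ)
    (S : Submodule ℝ (EuclideanSpace ℝ (Fin p))) (L μ κp κm ε : ℝ) : Prop :=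
  0 < μ ∧ μ < L ∧ 1 ≤ κp ∧ 1 ≤ κm ∧ 0 ≤ ε ∧
  ContDiff ℝ 2 f ∧
  (∀ x v : EuclideanSpace ℝ (Fin p),
    μ * ‖v‖ ^ 2 ≤ ⟪v, hessOp f x v⟫ ∧ ⟪v, hessOp f x v⟫ ≤ L * ‖v‖ ^ 2) ∧
  (∀ x v : EuclideanSpace ℝ (Fin p),
    L / κp * ‖projE S v‖ ^ 2 ≤ ⟪projE S v, hessOp f x (projE S v)⟫ ∧
    ⟪projE S v, hessOp f x (projE S v)⟫ ≤ L * ‖projE S v‖ ^ 2) ∧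
  (∀ x v : EuclideanSpace ℝ (Fin p),
    μ * ‖projE Sᗮ v‖ ^ 2 ≤ ⟪projE Sᗮ v, hessOp f x (projE Sᗮ v)⟫ ∧
    ⟪projE Sᗮ v, hessOp f x (projE Sᗮ v)⟫ ≤ κm * μ * ‖projE Sᗮ v‖ ^ 2) ∧
  (∀ x v : EuclideanSpace ℝ (Fin p),
    ‖projE S (hessOp f x (projE Sᗮ v))‖ ≤ ε * ‖v‖)



section Abstract
variable {E : Type*} [NormedAddCommGroup E] [InnerProductSpace ℝ E]

lemma psd_cs (A : E →L[ℝ] E) (hsym : ∀ u v : E, ⟪A u, v⟫ = ⟪u, A v⟫)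
    (h0 : ∀ v : E, 0 ≤ ⟪v, A v⟫) (u v : E) :
    ⟪u, A v⟫ ^ 2 ≤ ⟪u, A u⟫ * ⟪v, A v⟫ := by
  have key : ∀ t : ℝ, 0 ≤ ⟪v, A v⟫ * (t * t) + (2 * ⟪u, A v⟫) * t + ⟪u, A u⟫ := by
    intro t
    have h := h0 (u + t • v)
    have hexp : ⟪u + t • v, A (u + t • v)⟫
        = ⟪u, A u⟫ + 2 * ⟪u, A v⟫ * t + ⟪v, A v⟫ * (t * t) := by
      have hAv : A (u + t • v) = A u + t • A v := by simp [map_add, map_smul]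
      have hc : ⟪v, A u⟫ = ⟪u, A v⟫ := by
        rw [real_inner_comm]; exact hsym u v
      rw [hAv]
      simp only [inner_add_left, inner_add_right, real_inner_smul_left, real_inner_smul_right]
      rw [hc]; ring
    rw [hexp] at h; linarith
  have hd := discrim_le_zero key
  simp only [discrim] at hd
  nlinarith [hd]

lemma psd_norm_sq_le (A : E →L[ℝ] E) (hsym : ∀ u v : E, ⟪A u, v⟫ = ⟪u, A v⟫)
    (h0 : ∀ v : E, 0 ≤ ⟪v, A v⟫) {c : ℝ} (hc : 0 ≤ c)
    (hb : ∀ v : E, ⟪v, A v⟫ ≤ c * ‖v‖ ^ 2) (v : E) :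
    ‖A v‖ ^ 2 ≤ c * ⟪v, A v⟫ := by
  have hcs := psd_cs A hsym h0 (A v) v
  have h1 : ⟪A v, A v⟫ = ‖A v‖ ^ 2 := real_inner_self_eq_norm_sq (A v)
  have h2 : ⟪A v, A (A v)⟫ ≤ c * ‖A v‖ ^ 2 := hb (A v)
  have h3 : 0 ≤ ⟪v, A v⟫ := h0 v
  have h4 : 0 ≤ ⟪A v, A (A v)⟫ := h0 (A v)
  have h5 : 0 ≤ ‖A v‖ ^ 2 := by positivity
  by_cases hz : ‖A v‖ ^ 2 = 0
  · rw [hz]; exact mul_nonneg hc h3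
  · have hpos : 0 < ‖A v‖ ^ 2 := lt_of_le_of_ne h5 (Ne.symm hz)
    have h6 : ‖A v‖ ^ 2 * ‖A v‖ ^ 2 ≤ (c * ⟪v, A v⟫) * ‖A v‖ ^ 2 := by
      nlinarith [hcs, mul_le_mul_of_nonneg_right h2 h3]
    exact le_of_mul_le_mul_right h6 hpos

lemma step_bound (A : E →L[ℝ] E) (hsym : ∀ u v : E, ⟪A u, v⟫ = ⟪u, A v⟫)
    {a b η : ℝ} (hab : a ≤ b) (hη : 0 ≤ η)
    (hA1 : ∀ v : E, a * ‖v‖ ^ 2 ≤ ⟪v, A v⟫) (hA2 : ∀ v : E, ⟪v, A v⟫ ≤ b * ‖v‖ ^ 2)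
    (v : E) :
    ‖v - η • A v‖ ≤ max |1 - η * a| |1 - η * b| * ‖v‖ := by
  set Bop : E →L[ℝ] E := A - a • ContinuousLinearMap.id ℝ E with hBop
  have hBapp : ∀ w : E, Bop w = A w - a • w := by intro w; simp [hBop]
  have hBsym : ∀ u w : E, ⟪Bop u, w⟫ = ⟪u, Bop w⟫ := by
    intro u w
    simp only [hBapp, inner_sub_left, inner_sub_right, real_inner_smul_left,
      real_inner_smul_right, hsym u w]
  have hB0 : ∀ w : E, 0 ≤ ⟪w, Bop w⟫ := by
    intro w
    have := hA1 w
    simp only [hBapp, inner_sub_right, real_inner_smul_right, real_inner_self_eq_norm_sq]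
    linarith
  have hBup : ∀ w : E, ⟪w, Bop w⟫ ≤ (b - a) * ‖w‖ ^ 2 := by
    intro w
    have := hA2 w
    simp only [hBapp, inner_sub_right, real_inner_smul_right, real_inner_self_eq_norm_sq]
    nlinarith
  have hBn : ‖Bop v‖ ^ 2 ≤ (b - a) * ⟪v, Bop v⟫ :=
    psd_norm_sq_le Bop hBsym hB0 (by linarith) hBup v
  set s : ℝ := ⟪v, A v⟫ with hs
  set n : ℝ := ‖v‖ ^ 2 with hn
  have hn0 : 0 ≤ n := by positivity
  have hsl : a * n ≤ s := hA1 v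
  have hsu : s ≤ b * n := hA2 v
  have hBvs : ⟪v, Bop v⟫ = s - a * n := by
    simp only [hBapp, inner_sub_right, real_inner_smul_right, real_inner_self_eq_norm_sq, hs, hn]
  have hAv_sq : ‖A v‖ ^ 2 ≤ (a + b) * s - a * b * n := by
    have hdecomp : A v = Bop v + a • v := by simp [hBapp]
    have : ‖A v‖ ^ 2 = ‖Bop v‖ ^ 2 + 2 * a * ⟪Bop v, v⟫ + a ^ 2 * n := by
      rw [hdecomp, norm_add_sq_real, real_inner_smul_right, norm_smul, mul_pow, Real.norm_eq_abs, sq_abs,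
        ← hn]
      ring
    have hBvv : ⟪Bop v, v⟫ = s - a * n := by rw [real_inner_comm]; exact hBvs
    rw [this, hBvv] at *
    nlinarith [hBn, hBvs]
  have hexp : ‖v - η • A v‖ ^ 2 = n - 2 * η * s + η ^ 2 * ‖A v‖ ^ 2 := by
    rw [norm_sub_sq_real, real_inner_smul_right, norm_smul, mul_pow, Real.norm_eq_abs, sq_abs, ← hn, ← hs]
    ring
  have hmain : ‖v - η • A v‖ ^ 2 ≤ (max |1 - η * a| |1 - η * b|) ^ 2 * n := by
    rcases le_or_gt (η * (a + b)) 2 with hca | hca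
    · have h1 : ‖v - η • A v‖ ^ 2 ≤ (1 - η * a) ^ 2 * n := by
        rw [hexp]
        have hcoef : η * (η * (a + b) - 2) ≤ 0 := by nlinarith
        nlinarith [hAv_sq, hsl, sq_nonneg η]
      calc ‖v - η • A v‖ ^ 2 ≤ (1 - η * a) ^ 2 * n := h1
        _ ≤ (max |1 - η * a| |1 - η * b|) ^ 2 * n := by
            apply mul_le_mul_of_nonneg_right _ hn0
            rw [← sq_abs]
            exact pow_le_pow_left₀ (abs_nonneg _) (le_max_left _ _) 2
    · have h1 : ‖v - η • A v‖ ^ 2 ≤ (1 - η * b) ^ 2 * n := by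
        rw [hexp]
        have hcoef : 0 ≤ η * (η * (a + b) - 2) := by nlinarith
        nlinarith [hAv_sq, hsu, sq_nonneg η]
      calc ‖v - η • A v‖ ^ 2 ≤ (1 - η * b) ^ 2 * n := h1
        _ ≤ (max |1 - η * a| |1 - η * b|) ^ 2 * n := by
            apply mul_le_mul_of_nonneg_right _ hn0
            rw [← sq_abs]
            exact pow_le_pow_left₀ (abs_nonneg _) (le_max_right _ _) 2
  have hM : 0 ≤ max |1 - η * a| |1 - η * b| := le_trans (abs_nonneg _) (le_max_left _ _)
  have : ‖v - η • A v‖ ^ 2 ≤ (max |1 - η * a| |1 - η * b| * ‖v‖) ^ 2 := by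
    calc ‖v - η • A v‖ ^ 2 ≤ (max |1 - η * a| |1 - η * b|) ^ 2 * n := hmain
      _ = (max |1 - η * a| |1 - η * b| * ‖v‖) ^ 2 := by rw [hn]; ring
  exact le_of_pow_le_pow_left₀ two_ne_zero (by positivity) this

end Abstract



section Projections
variable {p : ℕ} (S : Submodule ℝ (EuclideanSpace ℝ (Fin p)))

lemma projE_apply (v : EuclideanSpace ℝ (Fin p)) :
    projE S v = S.subtypeL.comp S.orthogonalProjectionOnto v := rfl

lemma projE_add (u v : EuclideanSpace ℝ (Fin p)) :
    projE S (u + v) = projE S u + projE S v := by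
  simp [projE_apply, map_add]

lemma projE_smul (c : ℝ) (v : EuclideanSpace ℝ (Fin p)) :
    projE S (c • v) = c • projE S v := by
  simp [projE_apply, map_smul]

lemma projE_sub (u v : EuclideanSpace ℝ (Fin p)) :
    projE S (u - v) = projE S u - projE S v := by
  simp [projE_apply, map_sub]

lemma projE_inner_left (u v : EuclideanSpace ℝ (Fin p)) :
    ⟪projE S u, v⟫ = ⟪u, projE S v⟫ :=
  Submodule.inner_starProjection_left_eq_right S u v

lemma projE_mem (v : EuclideanSpace ℝ (Fin p)) : projE S v ∈ S := by
  simp [projE]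

lemma projE_of_mem {v : EuclideanSpace ℝ (Fin p)} (hv : v ∈ S) : projE S v = v := by
  simp only [projE]
  exact Submodule.starProjection_eq_self_iff.2 hv

lemma projE_idem (v : EuclideanSpace ℝ (Fin p)) : projE S (projE S v) = projE S v :=
  projE_of_mem S (projE_mem S v)

lemma projE_orth_zero (v : EuclideanSpace ℝ (Fin p)) : projE S (projE Sᗮ v) = 0 := by
  have h : S.orthogonalProjectionOnto (projE Sᗮ v) = 0 :=
    Submodule.orthogonalProjectionOnto_apply_of_mem_orthogonal (projE_mem Sᗮ v)
  show ((S.orthogonalProjectionOnto (projE Sᗮ v) : _) : EuclideanSpace ℝ (Fin p)) = 0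
  rw [h]; rfl

lemma projE_orth_zero' (v : EuclideanSpace ℝ (Fin p)) : projE Sᗮ (projE S v) = 0 := by
  have h : Sᗮ.orthogonalProjectionOnto (projE S v) = 0 :=
    Submodule.orthogonalProjectionOnto_apply_of_mem_orthogonal
      (S.le_orthogonal_orthogonal (projE_mem S v))
  show ((Sᗮ.orthogonalProjectionOnto (projE S v) : _) : EuclideanSpace ℝ (Fin p)) = 0
  rw [h]; rfl

lemma projE_decomp (v : EuclideanSpace ℝ (Fin p)) : projE S v + projE Sᗮ v = v :=
  Submodule.starProjection_add_starProjection_orthogonal (K := S) v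

lemma projE_pythagoras (v : EuclideanSpace ℝ (Fin p)) :
    ‖v‖ ^ 2 = ‖projE S v‖ ^ 2 + ‖projE Sᗮ v‖ ^ 2 := by
  have := Submodule.norm_sq_eq_add_norm_sq_projection v S
  simpa [projE] using this

lemma projE_norm_le (v : EuclideanSpace ℝ (Fin p)) : ‖projE S v‖ ≤ ‖v‖ := by
  have h := projE_pythagoras S v
  have h2 : ‖projE S v‖ ^ 2 ≤ ‖v‖ ^ 2 := by nlinarith [sq_nonneg ‖projE Sᗮ v‖]
  exact le_of_pow_le_pow_left₀ two_ne_zero (norm_nonneg _) h2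

end Projections

section Hessian
variable {p : ℕ} {f : EuclideanSpace ℝ (Fin p) → ℝ}

lemma gradient_eq_comp (f : EuclideanSpace ℝ (Fin p) → ℝ) :
    gradient f = (⇑((InnerProductSpace.toDual ℝ
      (EuclideanSpace ℝ (Fin p))).symm) ∘ fun y => fderiv ℝ f y) := rfl

lemma contDiff_gradient (hf : ContDiff ℝ 2 f) : ContDiff ℝ 1 (gradient f) := by
  rw [gradient_eq_comp]
  exact ((InnerProductSpace.toDual ℝ (EuclideanSpace ℝ (Fin p))).symm.contDiff).comp
    (hf.fderiv_right (by norm_num))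

lemma hess_inner_eq (hf : ContDiff ℝ 2 f) (x u v : EuclideanSpace ℝ (Fin p)) :
    ⟪v, hessOp f x u⟫ = fderiv ℝ (fderiv ℝ f) x u v := by
  have hgradF : HasFDerivAt (gradient f) (hessOp f x) x :=
    ((contDiff_gradient hf).differentiable one_ne_zero x).hasFDerivAt
  have h1 : HasFDerivAt (fun y => (innerSL ℝ v) (gradient f y))
      ((innerSL ℝ v).comp (hessOp f x)) x :=
    ((innerSL ℝ v).hasFDerivAt).comp x hgradF
  have hf''F : HasFDerivAt (fderiv ℝ f) (fderiv ℝ (fderiv ℝ f) x) x :=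
    ((hf.fderiv_right (m := 1) le_rfl).differentiable one_ne_zero x).hasFDerivAt
  have h2 : HasFDerivAt (fun y => (ContinuousLinearMap.apply ℝ ℝ v) (fderiv ℝ f y))
      ((ContinuousLinearMap.apply ℝ ℝ v).comp (fderiv ℝ (fderiv ℝ f) x)) x :=
    ((ContinuousLinearMap.apply ℝ ℝ v).hasFDerivAt).comp x hf''F
  have heq : (fun y => (innerSL ℝ v) (gradient f y))
      = (fun y => (ContinuousLinearMap.apply ℝ ℝ v) (fderiv ℝ f y)) := by
    funext y
    show (inner ℝ v (gradient f y) : ℝ) = fderiv ℝ f y v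
    rw [real_inner_comm]
    exact InnerProductSpace.toDual_symm_apply
  rw [heq] at h1
  have huniq := h1.unique h2
  have := congrFun (congrArg (fun (L : _ →L[ℝ] ℝ) => (L : _ → ℝ)) huniq) u
  simpa using this

lemma hessOp_symm (hf : ContDiff ℝ 2 f) (x u v : EuclideanSpace ℝ (Fin p)) :
    ⟪hessOp f x u, v⟫ = ⟪u, hessOp f x v⟫ := by
  have hsymm : ∀ a b : EuclideanSpace ℝ (Fin p),
      fderiv ℝ (fderiv ℝ f) x a b = fderiv ℝ (fderiv ℝ f) x b a := by
    apply second_derivative_symmetric (f := f) (f' := fun y => fderiv ℝ f y)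
    · intro y
      exact (hf.differentiable two_ne_zero y).hasFDerivAt
    · exact ((hf.fderiv_right (m := 1) le_rfl).differentiable one_ne_zero x).hasFDerivAt
  have h1 := hess_inner_eq hf x u v
  have h2 := hess_inner_eq hf x v u
  have h3 := real_inner_comm (hessOp f x u) v
  linarith [hsymm u v]

lemma gradient_minimizer_eq_zero (hf : ContDiff ℝ 2 f) {θstar : EuclideanSpace ℝ (Fin p)}
    (hmin : ∀ x, f θstar ≤ f x) : gradient f θstar = 0 := by
  have hloc : IsLocalMin f θstar := Filter.Eventually.of_forall hmin
  have := hloc.fderiv_eq_zero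
  rw [gradient, this, map_zero]

end Hessian

section Hbar
variable {p : ℕ} {f : EuclideanSpace ℝ (Fin p) → ℝ}

noncomputable def HbarOp (f : EuclideanSpace ℝ (Fin p) → ℝ)
    (θstar r : EuclideanSpace ℝ (Fin p)) :
    EuclideanSpace ℝ (Fin p) →L[ℝ] EuclideanSpace ℝ (Fin p) :=
  ∫ s in (0:ℝ)..1, hessOp f (θstar + s • r)

lemma continuous_hessOp (hf : ContDiff ℝ 2 f) : Continuous (hessOp f) :=
  (contDiff_gradient hf).continuous_fderiv one_ne_zero

lemma continuous_hessOp_line (hf : ContDiff ℝ 2 f) (θstar r : EuclideanSpace ℝ (Fin p)) :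
    Continuous (fun s : ℝ => hessOp f (θstar + s • r)) :=
  (continuous_hessOp hf).comp (continuous_const.add (continuous_id.smul continuous_const))

lemma hessOp_line_intervalIntegrable (hf : ContDiff ℝ 2 f) (θstar r : EuclideanSpace ℝ (Fin p)) :
    IntervalIntegrable (fun s : ℝ => hessOp f (θstar + s • r))
      MeasureTheory.volume 0 1 :=
  (continuous_hessOp_line hf θstar r).intervalIntegrable 0 1

lemma HbarOp_apply (hf : ContDiff ℝ 2 f) (θstar r w : EuclideanSpace ℝ (Fin p)) :
    HbarOp f θstar r w = ∫ s in (0:ℝ)..1, hessOp f (θstar + s • r) w :=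
  ContinuousLinearMap.intervalIntegral_apply (hessOp_line_intervalIntegrable hf θstar r) w

lemma hessOp_line_apply_intervalIntegrable (hf : ContDiff ℝ 2 f)
    (θstar r w : EuclideanSpace ℝ (Fin p)) :
    IntervalIntegrable (fun s : ℝ => hessOp f (θstar + s • r) w)
      MeasureTheory.volume 0 1 := by
  apply Continuous.intervalIntegrable
  exact (ContinuousLinearMap.apply ℝ _ w).continuous.comp (continuous_hessOp_line hf θstar r)

lemma HbarOp_grad (hf : ContDiff ℝ 2 f) (θstar r : EuclideanSpace ℝ (Fin p)) :
    HbarOp f θstar r r = gradient f (θstar + r) - gradient f θstar := by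
  rw [HbarOp_apply hf]
  have hderiv : ∀ t ∈ Set.uIcc (0:ℝ) 1,
      HasDerivAt (fun s : ℝ => gradient f (θstar + s • r))
        (hessOp f (θstar + t • r) r) t := by
    intro t _
    have hline : HasDerivAt (fun s : ℝ => θstar + s • r) r t := by
      have h1 : HasDerivAt (fun s : ℝ => s • r) ((1:ℝ) • r) t :=
        (hasDerivAt_id t).smul_const r
      simpa using h1.const_add θstar
    have hgradF : HasFDerivAt (gradient f) (hessOp f (θstar + t • r)) (θstar + t • r) :=
      ((contDiff_gradient hf).differentiable one_ne_zero _).hasFDerivAt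
    exact hgradF.comp_hasDerivAt t hline
  have := intervalIntegral.integral_eq_sub_of_hasDerivAt hderiv
    (hessOp_line_apply_intervalIntegrable hf θstar r r)
  rw [this]
  norm_num

lemma inner_HbarOp (hf : ContDiff ℝ 2 f) (θstar r u w : EuclideanSpace ℝ (Fin p)) :
    ⟪u, HbarOp f θstar r w⟫
      = ∫ s in (0:ℝ)..1, ⟪u, hessOp f (θstar + s • r) w⟫ := by
  rw [HbarOp_apply hf]
  exact ((innerSL ℝ u).intervalIntegral_comp_comm
    (hessOp_line_apply_intervalIntegrable hf θstar r w)).symm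

lemma HbarOp_symm (hf : ContDiff ℝ 2 f) (θstar r u w : EuclideanSpace ℝ (Fin p)) :
    ⟪HbarOp f θstar r u, w⟫ = ⟪u, HbarOp f θstar r w⟫ := by
  rw [real_inner_comm, inner_HbarOp hf, inner_HbarOp hf]
  apply intervalIntegral.integral_congr
  intro s _
  have h := hessOp_symm hf (θstar + s • r) u w
  have h2 := real_inner_comm (hessOp f (θstar + s • r) u) w
  linarith

lemma inner_le_integral_bound {g : ℝ → ℝ} (hg : Continuous g) {c : ℝ}
    (h : ∀ s ∈ Set.Icc (0:ℝ) 1, c ≤ g s) : c ≤ ∫ s in (0:ℝ)..1, g s := by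
  have hc : ∫ _ in (0:ℝ)..1, c = c := by simp
  rw [← hc]
  exact intervalIntegral.integral_mono_on zero_le_one intervalIntegrable_const
    (hg.intervalIntegrable 0 1) h

lemma integral_le_bound {g : ℝ → ℝ} (hg : Continuous g) {c : ℝ}
    (h : ∀ s ∈ Set.Icc (0:ℝ) 1, g s ≤ c) : (∫ s in (0:ℝ)..1, g s) ≤ c := by
  have hc : ∫ _ in (0:ℝ)..1, c = c := by simp
  rw [← hc]
  exact intervalIntegral.integral_mono_on zero_le_one (hg.intervalIntegrable 0 1)
    intervalIntegrable_const h

lemma continuous_form_line (hf : ContDiff ℝ 2 f) (θstar r u w : EuclideanSpace ℝ (Fin p)) :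
    Continuous (fun s : ℝ => ⟪u, hessOp f (θstar + s • r) w⟫) := by
  apply Continuous.inner continuous_const
  exact (ContinuousLinearMap.apply ℝ _ w).continuous.comp (continuous_hessOp_line hf θstar r)

lemma HbarOp_form_lower (hf : ContDiff ℝ 2 f) {θstar r : EuclideanSpace ℝ (Fin p)} {c : ℝ}
    {w : EuclideanSpace ℝ (Fin p)}
    (h : ∀ x : EuclideanSpace ℝ (Fin p), c ≤ ⟪w, hessOp f x w⟫) :
    c ≤ ⟪w, HbarOp f θstar r w⟫ := by
  rw [inner_HbarOp hf]
  exact inner_le_integral_bound (continuous_form_line hf θstar r w w)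
    (fun s _ => h (θstar + s • r))

lemma HbarOp_form_upper (hf : ContDiff ℝ 2 f) {θstar r : EuclideanSpace ℝ (Fin p)} {c : ℝ}
    {w : EuclideanSpace ℝ (Fin p)}
    (h : ∀ x : EuclideanSpace ℝ (Fin p), ⟪w, hessOp f x w⟫ ≤ c) :
    ⟪w, HbarOp f θstar r w⟫ ≤ c := by
  rw [inner_HbarOp hf]
  exact integral_le_bound (continuous_form_line hf θstar r w w)
    (fun s _ => h (θstar + s • r))

lemma HbarOp_cross {S : Submodule ℝ (EuclideanSpace ℝ (Fin p))}
    (hf : ContDiff ℝ 2 f) {θstar r : EuclideanSpace ℝ (Fin p)} {ε : ℝ}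
    (hε : ∀ x v : EuclideanSpace ℝ (Fin p), ‖projE S (hessOp f x (projE Sᗮ v))‖ ≤ ε * ‖v‖)
    (v : EuclideanSpace ℝ (Fin p)) :
    ‖projE S (HbarOp f θstar r (projE Sᗮ v))‖ ≤ ε * ‖v‖ := by
  set P : EuclideanSpace ℝ (Fin p) →L[ℝ] EuclideanSpace ℝ (Fin p) :=
    S.subtypeL.comp S.orthogonalProjectionOnto with hP
  have hPv : ∀ z, projE S z = P z := fun z => rfl
  rw [hPv, HbarOp_apply hf,
    ← P.intervalIntegral_comp_comm (hessOp_line_apply_intervalIntegrable hf θstar r _)]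
  have hb := intervalIntegral.norm_integral_le_of_norm_le_const
    (C := ε * ‖v‖) (f := fun s => P (hessOp f (θstar + s • r) (projE Sᗮ v)))
    (a := 0) (b := 1) ?_
  · simpa using hb
  · intro s _
    rw [← hPv]
    exact hε (θstar + s • r) v

end Hbar

section Step
variable {p : ℕ} (S : Submodule ℝ (EuclideanSpace ℝ (Fin p)))
variable (H : EuclideanSpace ℝ (Fin p) →L[ℝ] EuclideanSpace ℝ (Fin p))

lemma cross_reverse (hsym : ∀ u v : EuclideanSpace ℝ (Fin p), ⟪H u, v⟫ = ⟪u, H v⟫)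
    {ε : ℝ} (hε0 : 0 ≤ ε)
    (hc : ∀ v : EuclideanSpace ℝ (Fin p), ‖projE S (H (projE Sᗮ v))‖ ≤ ε * ‖v‖)
    (u : EuclideanSpace ℝ (Fin p)) :
    ‖projE Sᗮ (H (projE S u))‖ ≤ ε * ‖projE S u‖ := by
  have claim : ∀ y : EuclideanSpace ℝ (Fin p), ‖projE Sᗮ (H (projE S y))‖ ≤ ε * ‖y‖ := by
    intro y
    set z := projE Sᗮ (H (projE S y)) with hz
    have hz2 : projE Sᗮ z = z := projE_idem Sᗮ _
    have key : ‖z‖ ^ 2 ≤ ε * ‖z‖ * ‖y‖ := by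
      have h1 : ‖z‖ ^ 2 = ⟪z, projE Sᗮ (H (projE S y))⟫ := by
        rw [← hz, real_inner_self_eq_norm_sq]
      have h2 : ⟪z, projE Sᗮ (H (projE S y))⟫ = ⟪projE S (H (projE Sᗮ z)), y⟫ := by
        rw [← projE_inner_left Sᗮ z, hz2, ← hsym, ← projE_inner_left S]
      have h3 : ⟪projE S (H (projE Sᗮ z)), y⟫ ≤ ε * ‖z‖ * ‖y‖ := by
        calc ⟪projE S (H (projE Sᗮ z)), y⟫ ≤ ‖projE S (H (projE Sᗮ z))‖ * ‖y‖ :=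
              real_inner_le_norm _ _
          _ ≤ ε * ‖z‖ * ‖y‖ := by
              apply mul_le_mul_of_nonneg_right (hc z) (norm_nonneg _)
      rw [h1, h2]; exact h3
    by_cases h0 : ‖z‖ = 0
    · rw [h0]; positivity
    · have hp : 0 < ‖z‖ := lt_of_le_of_ne (norm_nonneg _) (Ne.symm h0)
      nlinarith [key]
  have := claim (projE S u)
  rwa [projE_idem S u] at this

lemma step_proj (hsym : ∀ u v : EuclideanSpace ℝ (Fin p), ⟪H u, v⟫ = ⟪u, H v⟫)
    {a b η : ℝ} (hab : a ≤ b) (hη : 0 ≤ η)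
    (hlow : ∀ v : EuclideanSpace ℝ (Fin p),
      a * ‖projE S v‖ ^ 2 ≤ ⟪projE S v, H (projE S v)⟫)
    (hup : ∀ v : EuclideanSpace ℝ (Fin p),
      ⟪projE S v, H (projE S v)⟫ ≤ b * ‖projE S v‖ ^ 2)
    (r : EuclideanSpace ℝ (Fin p)) :
    ‖projE S (r - η • H r)‖
      ≤ max |1 - η * a| |1 - η * b| * ‖projE S r‖
        + η * ‖projE S (H (projE Sᗮ r))‖ := by
  set P : EuclideanSpace ℝ (Fin p) →L[ℝ] EuclideanSpace ℝ (Fin p) := S.subtypeL.comp S.orthogonalProjectionOnto with hPdef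
  set Q : EuclideanSpace ℝ (Fin p) →L[ℝ] EuclideanSpace ℝ (Fin p) := Sᗮ.subtypeL.comp Sᗮ.orthogonalProjectionOnto with hQdef
  have hPz : ∀ z : EuclideanSpace ℝ (Fin p), P z = projE S z := fun z => rfl
  have hQz : ∀ z : EuclideanSpace ℝ (Fin p), Q z = projE Sᗮ z := fun z => rfl
  set Atil : EuclideanSpace ℝ (Fin p) →L[ℝ] EuclideanSpace ℝ (Fin p) := P.comp (H.comp P) + a • Q with hAdef
  have hAz : ∀ z : EuclideanSpace ℝ (Fin p), Atil z = projE S (H (projE S z)) + a • projE Sᗮ z := by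
    intro z
    simp [hAdef, ContinuousLinearMap.add_apply, ContinuousLinearMap.comp_apply,
      ContinuousLinearMap.smul_apply, hPz, hQz]
  have hsymA : ∀ u v : EuclideanSpace ℝ (Fin p), ⟪Atil u, v⟫ = ⟪u, Atil v⟫ := by
    intro u v
    rw [hAz, hAz]
    rw [inner_add_left, inner_add_right, real_inner_smul_left, real_inner_smul_right]
    have h1 : ⟪projE S (H (projE S u)), v⟫ = ⟪u, projE S (H (projE S v))⟫ := by
      rw [projE_inner_left S, hsym, ← projE_inner_left S, projE_inner_left S]
    have h2 : ⟪projE Sᗮ u, v⟫ = ⟪u, projE Sᗮ v⟫ := projE_inner_left Sᗮ u v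
    rw [h1, h2]
  have hformA : ∀ v : EuclideanSpace ℝ (Fin p),
      ⟪v, Atil v⟫ = ⟪projE S v, H (projE S v)⟫ + a * ‖projE Sᗮ v‖ ^ 2 := by
    intro v
    rw [hAz, inner_add_right, real_inner_smul_right]
    have h1 : ⟪v, projE S (H (projE S v))⟫ = ⟪projE S v, H (projE S v)⟫ := by
      rw [← projE_inner_left S]
    have h2 : ⟪v, projE Sᗮ v⟫ = ‖projE Sᗮ v‖ ^ 2 := by
      rw [← real_inner_self_eq_norm_sq]
      have h := projE_inner_left Sᗮ v (projE Sᗮ v)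
      rw [projE_idem] at h
      exact h.symm
    rw [h1, h2]
  have hlowA : ∀ v : EuclideanSpace ℝ (Fin p), a * ‖v‖ ^ 2 ≤ ⟪v, Atil v⟫ := by
    intro v
    rw [hformA]
    have := hlow v
    have hpyth := projE_pythagoras S v
    have h3 : a * ‖v‖ ^ 2 = a * ‖projE S v‖ ^ 2 + a * ‖projE Sᗮ v‖ ^ 2 := by
      rw [hpyth]; ring
    linarith
  have hupA : ∀ v : EuclideanSpace ℝ (Fin p), ⟪v, Atil v⟫ ≤ b * ‖v‖ ^ 2 := by
    intro v
    rw [hformA]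
    have := hup v
    have hpyth := projE_pythagoras S v
    have h3 : b * ‖v‖ ^ 2 = b * ‖projE S v‖ ^ 2 + b * ‖projE Sᗮ v‖ ^ 2 := by
      rw [hpyth]; ring
    nlinarith [sq_nonneg ‖projE Sᗮ v‖]
  set w := projE S r with hw
  have hAw : Atil w = projE S (H w) := by
    rw [hAz, hw, projE_idem S, projE_orth_zero' S, smul_zero, add_zero]
  have hdecomp : projE S (r - η • H r)
      = (w - η • Atil w) - η • projE S (H (projE Sᗮ r)) := by
    rw [projE_sub, projE_smul]
    have hr : H r = H w + H (projE Sᗮ r) := by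
      rw [← map_add]
      congr 1
      rw [hw]
      exact (projE_decomp S r).symm
    rw [hr, projE_add, hAw]
    rw [smul_add]
    abel
  rw [hdecomp]
  calc ‖(w - η • Atil w) - η • projE S (H (projE Sᗮ r))‖
      ≤ ‖w - η • Atil w‖ + ‖η • projE S (H (projE Sᗮ r))‖ := norm_sub_le _ _
    _ ≤ max |1 - η * a| |1 - η * b| * ‖w‖ + η * ‖projE S (H (projE Sᗮ r))‖ := by
        apply add_le_add
        · exact step_bound Atil hsymA hab hη hlowA hupA w
        · rw [norm_smul, Real.norm_eq_abs, abs_of_nonneg hη]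

end Step

lemma step_combine {fac cr Bb a b : ℝ} (hfac : 0 ≤ fac) (hcr : 0 ≤ cr) (hfc : fac + cr ≤ 1)
    (ha : a ≤ Bb) (hb : b ≤ Bb) (ha0 : 0 ≤ a) (hb0 : 0 ≤ b) (hB : 0 ≤ Bb) :
    fac * a + cr * b ≤ Bb := by nlinarith

set_option maxHeartbeats 2000000 in
/-- **One-period contraction for nonlinear problems** (key claim in the proof of
Theorem 2).  Under the bimodal Hessian condition, with period
`T ≥ 2κ₊·log(2L/(κ₋·μ)) + 1`, cyclical learning rates `η₋ = 1/(κ₋·μ)`, `η₊ = 1/L`, and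
cross-smoothness `4ε ≤ min(1, κ₋/T)·μ`, after one full period the projected residuals
contract: `max(‖Π_S(θ_T − θ⋆)‖, ‖Π_{Sᶜ}(θ_T − θ⋆)‖) ≤ (1 − 1/(4κ₋))·B` where
`B = max(‖Π_S(θ_0 − θ⋆)‖, ‖Π_{Sᶜ}(θ_0 − θ⋆)‖)`. -/
theorem unstable_clr_one_period
    {p : ℕ} (f : EuclideanSpace ℝ (Fin p) → ℝ)
    (S : Submodule ℝ (EuclideanSpace ℝ (Fin p)))
    (L μ κp κm ε : ℝ) (hbim : BimodalHessian f S L μ κp κm ε)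
    (θstar : EuclideanSpace ℝ (Fin p)) (hmin : ∀ x, f θstar ≤ f x)
    (T : ℕ) (hT1 : 1 < T) (hT : (T : ℝ) ≥ 2 * κp * Real.log (2 * L / (κm * μ)) + 1)
    (ηm ηp : ℝ) (hηm : ηm = 1 / (κm * μ)) (hηp : ηp = 1 / L)
    (hcross : 4 * ε ≤ min 1 (κm / T) * μ)
    (η : ℕ → ℝ) (hη : ∀ t, η t = if t % T = T - 1 then ηm else ηp)
    (θ : ℕ → EuclideanSpace ℝ (Fin p))
    (hθ : ∀ t, θ (t + 1) = θ t - η t • gradient f (θ t))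
    (B : ℝ) (hB : B = max ‖projE S (θ 0 - θstar)‖ ‖projE Sᗮ (θ 0 - θstar)‖) :
    max ‖projE S (θ T - θstar)‖ ‖projE Sᗮ (θ T - θstar)‖ ≤ (1 - 1 / (4 * κm)) * B := by
  obtain ⟨hμ, hμL, hκp, hκm, hε0, hf, hglob, hS, hSp, hcrossH⟩ := hbim
  have hL : 0 < L := lt_trans hμ hμL
  have hκm0 : 0 < κm := lt_of_lt_of_le one_pos hκm
  have hκp0 : 0 < κp := lt_of_lt_of_le one_pos hκp
  have hκmμ : 0 < κm * μ := mul_pos hκm0 hμ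
  have hT0 : (0:ℝ) < T := by
    have : 0 < T := by omega
    exact_mod_cast this
  have hT2 : (2:ℝ) ≤ T := by exact_mod_cast hT1
  have hηm_pos : 0 < ηm := by rw [hηm]; positivity
  have hηp_pos : 0 < ηp := by rw [hηp]; positivity
  have hηpos : ∀ t, 0 ≤ η t := by
    intro t; rw [hη]; split
    · exact hηm_pos.le
    · exact hηp_pos.le
  have hB0 : 0 ≤ B := by rw [hB]; exact le_trans (norm_nonneg _) (le_max_left _ _)
  have h1κm : 1/κm ≤ 1 := by rw [div_le_one hκm0]; exact hκm
  have h1κm0 : 0 ≤ 1 - 1/κm := by linarith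
  have hε4 : 4 * ε ≤ μ := by
    have h1 : min 1 (κm / T) * μ ≤ 1 * μ :=
      mul_le_mul_of_nonneg_right (min_le_left _ _) hμ.le
    linarith only [hcross, h1]
  have hεT : 4 * ε * T ≤ κm * μ := by
    have h1 : min 1 (κm / T) * μ ≤ (κm / T) * μ :=
      mul_le_mul_of_nonneg_right (min_le_right _ _) hμ.le
    have h2 : 4 * ε ≤ (κm / T) * μ := le_trans hcross h1
    have h3 : 4 * ε * T ≤ ((κm / T) * μ) * T :=
      mul_le_mul_of_nonneg_right h2 hT0.le
    calc 4 * ε * T ≤ ((κm / T) * μ) * T := h3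
      _ = κm * μ := by field_simp
  have hgradstar : gradient f θstar = 0 := gradient_minimizer_eq_zero hf hmin
  have key : ∀ t, gradient f (θ t)
      = HbarOp f θstar (θ t - θstar) (θ t - θstar) := by
    intro t
    have h1 := HbarOp_grad hf θstar (θ t - θstar)
    have h2 : θstar + (θ t - θstar) = θ t := by abel
    rw [h2, hgradstar, sub_zero] at h1
    exact h1.symm
  have hstep : ∀ t, θ (t+1) - θstar
      = (θ t - θstar) - η t • HbarOp f θstar (θ t - θstar) (θ t - θstar) := by
    intro t
    rw [hθ t, key t]
    abel
  set aS : ℝ := max (L / κp) μ with haS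
  have haSμ : μ ≤ aS := le_max_right _ _
  have haSκp : L / κp ≤ aS := le_max_left _ _
  have haSL : aS ≤ L := by
    apply max_le
    · calc L / κp ≤ L / 1 := by
            apply div_le_div_of_nonneg_left hL.le one_pos hκp
      _ = L := by ring
    · exact hμL.le
  have haS0 : 0 < aS := lt_of_lt_of_le hμ haSμ
  have mainS : ∀ t : ℕ,
      ‖projE S (θ (t+1) - θstar)‖ ≤
        max |1 - η t * aS| |1 - η t * L| * ‖projE S (θ t - θstar)‖
          + η t * ε * ‖projE Sᗮ (θ t - θstar)‖ := by
    intro t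
    rw [hstep t]
    set Hb := HbarOp f θstar (θ t - θstar) with hHb
    have hsymH : ∀ u v : EuclideanSpace ℝ (Fin p), ⟪Hb u, v⟫ = ⟪u, Hb v⟫ :=
      fun u v => HbarOp_symm hf θstar (θ t - θstar) u v
    have hlowS : ∀ v : EuclideanSpace ℝ (Fin p),
        aS * ‖projE S v‖ ^ 2 ≤ ⟪projE S v, Hb (projE S v)⟫ := by
      intro v
      apply HbarOp_form_lower hf
      intro x
      by_cases hc : L / κp ≤ μ
      · rw [haS, max_eq_right hc]; exact (hglob x (projE S v)).1
      · rw [haS, max_eq_left (le_of_not_ge hc)]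
        exact (hS x v).1
    have hupS : ∀ v : EuclideanSpace ℝ (Fin p),
        ⟪projE S v, Hb (projE S v)⟫ ≤ L * ‖projE S v‖ ^ 2 := by
      intro v
      exact HbarOp_form_upper hf (fun x => (hS x v).2)
    have hst := step_proj S Hb hsymH haSL (hηpos t) hlowS hupS (θ t - θstar)
    have hcr : ‖projE S (Hb (projE Sᗮ (θ t - θstar)))‖
        ≤ ε * ‖projE Sᗮ (θ t - θstar)‖ := by
      have h := HbarOp_cross (θstar := θstar) (r := θ t - θstar) hf hcrossH (projE Sᗮ (θ t - θstar))
      rwa [projE_idem] at h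
    have h2 : η t * ‖projE S (Hb (projE Sᗮ (θ t - θstar)))‖
        ≤ η t * ε * ‖projE Sᗮ (θ t - θstar)‖ := by
      rw [mul_assoc]
      exact mul_le_mul_of_nonneg_left hcr (hηpos t)
    linarith only [hst, h2]
  have mainB : ∀ (t : ℕ) (c : ℝ), μ ≤ c →
      (∀ x v : EuclideanSpace ℝ (Fin p),
        ⟪projE Sᗮ v, hessOp f x (projE Sᗮ v)⟫ ≤ c * ‖projE Sᗮ v‖ ^ 2) →
      ‖projE Sᗮ (θ (t+1) - θstar)‖ ≤
        max |1 - η t * μ| |1 - η t * c| * ‖projE Sᗮ (θ t - θstar)‖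
          + η t * ε * ‖projE S (θ t - θstar)‖ := by
    intro t c hc hupc
    rw [hstep t]
    set Hb := HbarOp f θstar (θ t - θstar) with hHb
    have hsymH : ∀ u v : EuclideanSpace ℝ (Fin p), ⟪Hb u, v⟫ = ⟪u, Hb v⟫ :=
      fun u v => HbarOp_symm hf θstar (θ t - θstar) u v
    have hlowB : ∀ v : EuclideanSpace ℝ (Fin p),
        μ * ‖projE Sᗮ v‖ ^ 2 ≤ ⟪projE Sᗮ v, Hb (projE Sᗮ v)⟫ := by
      intro v
      apply HbarOp_form_lower hf
      intro x
      exact (hglob x (projE Sᗮ v)).1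
    have hupB : ∀ v : EuclideanSpace ℝ (Fin p),
        ⟪projE Sᗮ v, Hb (projE Sᗮ v)⟫ ≤ c * ‖projE Sᗮ v‖ ^ 2 := by
      intro v
      exact HbarOp_form_upper hf (fun x => hupc x v)
    have hst := step_proj Sᗮ Hb hsymH hc (hηpos t) hlowB hupB (θ t - θstar)
    rw [Submodule.orthogonal_orthogonal] at hst
    have hcr : ‖projE Sᗮ (Hb (projE S (θ t - θstar)))‖
        ≤ ε * ‖projE S (θ t - θstar)‖ :=
      cross_reverse S Hb hsymH hε0 (HbarOp_cross (θstar := θstar) (r := θ t - θstar) hf hcrossH) (θ t - θstar)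
    have h2 : η t * ‖projE Sᗮ (Hb (projE S (θ t - θstar)))‖
        ≤ η t * ε * ‖projE S (θ t - θstar)‖ := by
      rw [mul_assoc]
      exact mul_le_mul_of_nonneg_left hcr (hηpos t)
    linarith only [hst, h2]
  have hLne : L ≠ 0 := ne_of_gt hL
  have haSL1 : aS / L ≤ 1 := by rw [div_le_one hL]; exact haSL
  have hμL1 : μ / L ≤ 1 := by rw [div_le_one hL]; exact hμL.le
  have hsmallfactS : max |1 - 1/L * aS| |1 - 1/L * L| = 1 - aS/L := by
    rw [one_div, inv_mul_cancel₀ hLne]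
    have h1 : (1:ℝ) - L⁻¹ * aS = 1 - aS/L := by ring
    rw [h1, sub_self, abs_zero, abs_of_nonneg (by linarith)]
    exact max_eq_left (by linarith)
  have hsmallfactB : max |1 - 1/L * μ| |1 - 1/L * L| = 1 - μ/L := by
    rw [one_div, inv_mul_cancel₀ hLne]
    have h1 : (1:ℝ) - L⁻¹ * μ = 1 - μ/L := by ring
    rw [h1, sub_self, abs_zero, abs_of_nonneg (by linarith)]
    exact max_eq_left (by linarith)
  have hsmallη : ∀ t, t < T - 1 → η t = ηp := by
    intro t ht
    rw [hη]
    have h1 : t % T = t := Nat.mod_eq_of_lt (by omega)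
    rw [h1]
    have h2 : t ≠ T - 1 := by omega
    simp [h2]
  have inv1 : ∀ t, t ≤ T - 1 → ‖projE S (θ t - θstar)‖ ≤ B
      ∧ ‖projE Sᗮ (θ t - θstar)‖ ≤ B := by
    intro t
    induction t with
    | zero =>
      intro _
      exact ⟨by rw [hB]; exact le_max_left _ _, by rw [hB]; exact le_max_right _ _⟩
    | succ n ih =>
      intro hn
      have hn' : n ≤ T - 1 := by omega
      obtain ⟨ha, hb⟩ := ih hn'
      have ha0 : (0:ℝ) ≤ ‖projE S (θ n - θstar)‖ := norm_nonneg _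
      have hb0 : (0:ℝ) ≤ ‖projE Sᗮ (θ n - θstar)‖ := norm_nonneg _
      have hsm : η n = ηp := hsmallη n (by omega)
      have hcr0 : 0 ≤ 1 / L * ε := by positivity
      constructor
      · have h := mainS n
        rw [hsm, hηp, hsmallfactS] at h
        have hfc : (1 - aS / L) + 1 / L * ε ≤ 1 := by
          have h1 : ε ≤ aS := by linarith
          have h2 : 1 / L * ε ≤ 1 / L * aS :=
            mul_le_mul_of_nonneg_left h1 (by positivity)
          have h3 : (1:ℝ) / L * aS = aS / L := by ring
          linarith
        have hcomb := step_combine (by linarith : (0:ℝ) ≤ 1 - aS/L) hcr0 hfc ha hb ha0 hb0 hB0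
        calc ‖projE S (θ (n+1) - θstar)‖
            ≤ (1 - aS/L) * ‖projE S (θ n - θstar)‖
              + 1/L * ε * ‖projE Sᗮ (θ n - θstar)‖ := h
          _ ≤ B := by rw [mul_assoc] at hcomb ⊢; exact hcomb
      · have h := mainB n L hμL.le (fun x v => (hglob x (projE Sᗮ v)).2)
        rw [hsm, hηp, hsmallfactB] at h
        have hfc : (1 - μ / L) + 1 / L * ε ≤ 1 := by
          have h1 : ε ≤ μ := by linarith
          have h2 : 1 / L * ε ≤ 1 / L * μ :=
            mul_le_mul_of_nonneg_left h1 (by positivity)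
          have h3 : (1:ℝ) / L * μ = μ / L := by ring
          linarith
        have hcomb := step_combine (by linarith : (0:ℝ) ≤ 1 - μ/L) hcr0 hfc hb ha hb0 ha0 hB0
        calc ‖projE Sᗮ (θ (n+1) - θstar)‖
            ≤ (1 - μ/L) * ‖projE Sᗮ (θ n - θstar)‖
              + 1/L * ε * ‖projE S (θ n - θstar)‖ := h
          _ ≤ B := by rw [mul_assoc] at hcomb ⊢; exact hcomb
  set q : ℝ := 1 - 1/κp with hq
  have h1κp : 1/κp ≤ 1 := by rw [div_le_one hκp0]; exact hκp
  have hq0 : 0 ≤ q := by rw [hq]; linarith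
  have hqκp : q * κp = κp - 1 := by
    rw [hq, sub_mul, one_mul, one_div, inv_mul_cancel₀ (ne_of_gt hκp0)]
  have inv2 : ∀ t, t ≤ T - 1 →
      ‖projE S (θ t - θstar)‖ ≤ q^t * B + ε/L * κp * B := by
    intro t
    induction t with
    | zero =>
      intro _
      have h1 : ‖projE S (θ 0 - θstar)‖ ≤ B := by rw [hB]; exact le_max_left _ _
      have h2 : (0:ℝ) ≤ ε/L * κp * B := by positivity
      calc ‖projE S (θ 0 - θstar)‖ ≤ B := h1
        _ ≤ q^0 * B + ε/L * κp * B := by simp; linarith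
    | succ n ih =>
      intro hn
      have hn' : n ≤ T - 1 := by omega
      have ihn := ih hn'
      obtain ⟨_, hb⟩ := inv1 n hn'
      have ha0 : (0:ℝ) ≤ ‖projE S (θ n - θstar)‖ := norm_nonneg _
      have hsm : η n = ηp := hsmallη n (by omega)
      have h := mainS n
      rw [hsm, hηp, hsmallfactS] at h
      have hfactq : 1 - aS/L ≤ q := by
        rw [hq]
        have h1 : L ≤ aS * κp := (div_le_iff₀ hκp0).mp haSκp
        have h2 : 1/κp ≤ aS/L := by
          rw [div_le_div_iff₀ hκp0 hL]; linarith
        linarith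
      have t1 : (1 - aS/L) * ‖projE S (θ n - θstar)‖
          ≤ q * ‖projE S (θ n - θstar)‖ :=
        mul_le_mul_of_nonneg_right hfactq ha0
      have t2 : 1/L * ε * ‖projE Sᗮ (θ n - θstar)‖ ≤ ε/L * B := by
        have h1 : (1:ℝ)/L * ε = ε/L := by ring
        rw [h1]
        exact mul_le_mul_of_nonneg_left hb (by positivity)
      have t3 : q * ‖projE S (θ n - θstar)‖ ≤ q * (q^n * B + ε/L * κp * B) :=
        mul_le_mul_of_nonneg_left ihn hq0
      have heq : q * (q^n * B + ε/L * κp * B) + ε/L * B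
          = q^(n+1) * B + ε/L * κp * B := by
        have hpow : q^(n+1) = q^n * q := pow_succ q n
        rw [hpow]
        linear_combination (ε/L * B) * hqκp
      calc ‖projE S (θ (n+1) - θstar)‖
          ≤ (1 - aS/L) * ‖projE S (θ n - θstar)‖
            + 1/L * ε * ‖projE Sᗮ (θ n - θstar)‖ := h
        _ ≤ q * (q^n * B + ε/L * κp * B) + ε/L * B := by linarith only [t1, t2, t3]
        _ = q^(n+1) * B + ε/L * κp * B := heq
  -- the final (long) step
  have hTm1 : T - 1 < T := by omega
  have hlastη : η (T-1) = ηm := by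
    rw [hη, Nat.mod_eq_of_lt hTm1]
    simp
  have hsucc : (T-1) + 1 = T := by omega
  obtain ⟨haT1, hbT1⟩ := inv1 (T-1) le_rfl
  have hηmε : ηm * ε ≤ 1/(4*κm) := by
    rw [hηm]
    have h1 : (1/(κm*μ))*ε = ε/(κm*μ) := by ring
    rw [h1, div_le_div_iff₀ (by positivity) (by positivity)]
    linarith only [mul_le_mul_of_nonneg_right hε4 hκm0.le]
  have hηmεT : ηm * ε ≤ 1/(4*T) := by
    rw [hηm]
    have h1 : (1/(κm*μ))*ε = ε/(κm*μ) := by ring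
    rw [h1, div_le_div_iff₀ (by positivity) (by positivity)]
    linarith only [hεT]
  have hηmε0 : 0 ≤ ηm * ε := by positivity
  -- b-side conclusion
  have hbT : ‖projE Sᗮ (θ T - θstar)‖ ≤ (1 - 1/(4*κm)) * B := by
    have h := mainB (T-1) (κm*μ)
      (by linarith only [mul_le_mul_of_nonneg_right hκm hμ.le]) (fun x v => (hSp x v).2)
    rw [hsucc, hlastη] at h
    have hfact : max |1 - ηm * μ| |1 - ηm * (κm*μ)| = 1 - 1/κm := by
      rw [hηm]
      have h1 : 1/(κm*μ) * μ = 1/κm := by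
        rw [div_mul_eq_mul_div, one_mul, mul_comm κm μ, ← div_div,
          div_self (ne_of_gt hμ)]
      have h2 : 1/(κm*μ) * (κm*μ) = 1 := one_div_mul_cancel (ne_of_gt hκmμ)
      rw [h1, h2, sub_self, abs_zero, abs_of_nonneg h1κm0]
      exact max_eq_left h1κm0
    rw [hfact] at h
    have t1 : (1 - 1/κm) * ‖projE Sᗮ (θ (T-1) - θstar)‖ ≤ (1 - 1/κm) * B :=
      mul_le_mul_of_nonneg_left hbT1 h1κm0
    have t2 : ηm * ε * ‖projE S (θ (T-1) - θstar)‖ ≤ 1/(4*κm) * B :=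
      mul_le_mul hηmε haT1 (norm_nonneg _) (by positivity)
    have hfin : (1 - 1/κm) * B + 1/(4*κm) * B ≤ (1 - 1/(4*κm)) * B := by
      have h7 : (1 - 1/κm) * B + 1/(4*κm) * B
          = (1 - 1/(4*κm)) * B - (1/(2*κm)) * B := by ring
      have h5 : (0:ℝ) ≤ (1/(2*κm)) * B := by positivity
      linarith only [h7, h5]
    linarith only [h, t1, t2, hfin]
  -- a-side conclusion
  set x : ℝ := L/(κm*μ) with hx
  have hx0 : 0 < x := by rw [hx]; positivity
  have hxκm : 1/κm < x := by
    rw [hx, div_lt_div_iff₀ hκm0 (by positivity)]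
    linarith only [mul_lt_mul_of_pos_left hμL hκm0]
  have hηmL : ηm * L = x := by rw [hηm, hx]; ring
  have hηmμ2 : ηm * μ = 1/κm := by
    rw [hηm, div_mul_eq_mul_div, one_mul, mul_comm κm μ, ← div_div,
      div_self (ne_of_gt hμ)]
  have hηmaS_low : 1/κm ≤ ηm * aS := by
    rw [← hηmμ2]; exact mul_le_mul_of_nonneg_left haSμ hηm_pos.le
  have hηmaS_up : ηm * aS ≤ x := by
    rw [← hηmL]; exact mul_le_mul_of_nonneg_left haSL hηm_pos.le
  have hFb : max |1 - ηm*aS| |1 - ηm*L| ≤ max (1 - 1/κm) (x - 1) := by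
    apply max_le
    · rw [abs_le]
      constructor
      · have := le_max_right (1 - 1/κm) (x - 1)
        linarith
      · have := le_max_left (1 - 1/κm) (x - 1)
        linarith
    · rw [hηmL, abs_le]
      constructor
      · have := le_max_right (1 - 1/κm) (x - 1)
        linarith
      · have := le_max_left (1 - 1/κm) (x - 1)
        linarith
  have haT : ‖projE S (θ T - θstar)‖ ≤ (1 - 1/(4*κm)) * B := by
    have h := mainS (T-1)
    rw [hsucc, hlastη] at h
    rcases le_or_gt (x - 1) (1 - 1/κm) with hcase | hcase
    · -- easy case: the last step contracts the S component too
      have hFb2 : max |1 - ηm*aS| |1 - ηm*L| ≤ 1 - 1/κm := by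
        rw [max_eq_left hcase] at hFb; exact hFb
      have t1 : max |1 - ηm*aS| |1 - ηm*L| * ‖projE S (θ (T-1) - θstar)‖
          ≤ (1 - 1/κm) * B := by
        calc max |1 - ηm*aS| |1 - ηm*L| * ‖projE S (θ (T-1) - θstar)‖
            ≤ (1 - 1/κm) * ‖projE S (θ (T-1) - θstar)‖ :=
              mul_le_mul_of_nonneg_right hFb2 (norm_nonneg _)
          _ ≤ (1 - 1/κm) * B := mul_le_mul_of_nonneg_left haT1 h1κm0
      have t2 : ηm * ε * ‖projE Sᗮ (θ (T-1) - θstar)‖ ≤ 1/(4*κm) * B :=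
        mul_le_mul hηmε hbT1 (norm_nonneg _) (by positivity)
      have hfin : (1 - 1/κm) * B + 1/(4*κm) * B ≤ (1 - 1/(4*κm)) * B := by
        have h7 : (1 - 1/κm) * B + 1/(4*κm) * B
            = (1 - 1/(4*κm)) * B - (1/(2*κm)) * B := by ring
        have h5 : (0:ℝ) ≤ (1/(2*κm)) * B := by positivity
        linarith only [h7, h5]
      linarith only [h, t1, t2, hfin]
    · -- hard case: x > 1
      have hx1 : 1 < x := by linarith only [hcase, h1κm0]
      have hFb2 : max |1 - ηm*aS| |1 - ηm*L| ≤ x - 1 := by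
        rw [max_eq_right hcase.le] at hFb; exact hFb
      set lg : ℝ := Real.log (2*x) with hlg
      have h2x1 : (1:ℝ) < 2*x := by linarith
      have hlgpos : 0 < lg := Real.log_pos h2x1
      have hlg2 : Real.log 2 ≤ lg := by
        rw [hlg]
        exact Real.log_le_log (by norm_num) (by linarith)
      have hlog2 : (0.6931471803:ℝ) < Real.log 2 := Real.log_two_gt_d9
      have hlgd : (0.6931471803:ℝ) < lg := lt_of_lt_of_le hlog2 hlg2
      have hTlog : 2 * κp * lg + 1 ≤ T := by
        have harg : 2*L/(κm*μ) = 2*x := by rw [hx]; ring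
        rw [hlg, ← harg]
        exact hT
      have hκpT : 2 * κp * lg ≤ (T:ℝ) - 1 := by linarith only [hTlog]
      -- bound q^(T-1)
      have hqexp : q ≤ Real.exp (-(1/κp)) := by
        have hh := Real.add_one_le_exp (-(1/κp))
        rw [hq]; linarith only [hh]
      have hcast : ((T - 1 : ℕ) : ℝ) = (T:ℝ) - 1 := by
        have h1 : (1:ℕ) ≤ T := by omega
        rw [Nat.cast_sub h1, Nat.cast_one]
      have hqpow : q^(T-1) ≤ Real.exp (-(((T:ℝ)-1)/κp)) := by
        calc q^(T-1) ≤ (Real.exp (-(1/κp)))^(T-1) :=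
              pow_le_pow_left₀ hq0 hqexp (T-1)
          _ = Real.exp (((T-1 : ℕ):ℝ) * (-(1/κp))) := by
              rw [← Real.exp_nat_mul]
          _ = Real.exp (-(((T:ℝ)-1)/κp)) := by
              rw [hcast]; ring_nf
      have hexple : Real.exp (-(((T:ℝ)-1)/κp)) ≤ Real.exp (-(2*lg)) := by
        apply Real.exp_le_exp.mpr
        have h9 : 2*lg ≤ ((T:ℝ)-1)/κp := by
          rw [le_div_iff₀ hκp0]; linarith only [hκpT]
        linarith only [h9]
      have hexpval : Real.exp (-(2*lg)) = 1/(4*x^2) := by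
        rw [Real.exp_neg, hlg]
        have h1 : Real.exp (2 * Real.log (2*x)) = (2*x)^2 := by
          rw [two_mul, Real.exp_add, Real.exp_log (by linarith : (0:ℝ) < 2*x)]
          ring
        rw [h1]
        rw [one_div]
        congr 1
        ring
      have hq4 : q^(T-1) ≤ 1/(4*x^2) := by
        rw [← hexpval]
        exact le_trans hqpow hexple
      -- bound the ε κp part
      have hxκmμ : x * (κm*μ) = L := by rw [hx]; exact div_mul_cancel₀ L (ne_of_gt hκmμ)
      have h8 : 8*ε*κp*lg ≤ κm*μ := by
        have h1 : (0:ℝ) ≤ 4*ε := by linarith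
        have h2 : 4*ε*(2*κp*lg) ≤ 4*ε*((T:ℝ)-1) :=
          mul_le_mul_of_nonneg_left hκpT h1
        linarith only [h1, h2, hεT]
      have hεLκp : ε/L * κp ≤ 1/(8*x*lg) := by
        rw [div_mul_eq_mul_div, div_le_div_iff₀ hL (by positivity : (0:ℝ) < 8*x*lg)]
        have h2 : x*(8*ε*κp*lg) ≤ x*(κm*μ) := mul_le_mul_of_nonneg_left h8 hx0.le
        rw [hxκmμ] at h2
        linarith only [h2]
      have haT1' : ‖projE S (θ (T-1) - θstar)‖
          ≤ 1/(4*x^2) * B + 1/(8*x*lg) * B := by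
        have hinv2 := inv2 (T-1) le_rfl
        have u1 : q^(T-1) * B ≤ 1/(4*x^2) * B := mul_le_mul_of_nonneg_right hq4 hB0
        have u2 : ε/L * κp * B ≤ 1/(8*x*lg) * B :=
          mul_le_mul_of_nonneg_right hεLκp hB0
        linarith only [hinv2, u1, u2]
      have t1 : max |1 - ηm*aS| |1 - ηm*L| * ‖projE S (θ (T-1) - θstar)‖
          ≤ (x - 1) * (1/(4*x^2) * B + 1/(8*x*lg) * B) := by
        calc max |1 - ηm*aS| |1 - ηm*L| * ‖projE S (θ (T-1) - θstar)‖
            ≤ (x-1) * ‖projE S (θ (T-1) - θstar)‖ :=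
              mul_le_mul_of_nonneg_right hFb2 (norm_nonneg _)
          _ ≤ (x - 1) * (1/(4*x^2) * B + 1/(8*x*lg) * B) :=
              mul_le_mul_of_nonneg_left haT1' (by linarith)
      have t2 : ηm * ε * ‖projE Sᗮ (θ (T-1) - θstar)‖ ≤ 1/(4*T) * B :=
        mul_le_mul hηmεT hbT1 (norm_nonneg _) (by positivity)
      -- numeric inequality on the coefficients
      have hc1 : (x-1) * (1/(4*x^2)) ≤ 1/4 := by
        rw [mul_one_div, div_le_div_iff₀ (by positivity) (by norm_num : (0:ℝ) < 4)]
        linarith only [sq_nonneg (x-1), hx1]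
      have hc2 : (x-1) * (1/(8*x*lg)) ≤ 0.1804 := by
        rw [mul_one_div, div_le_iff₀ (by positivity : (0:ℝ) < 8*x*lg)]
        linarith only [mul_le_mul_of_nonneg_left hlgd.le hx0.le, hx0, hx1]
      have hc3 : 1/(4*(T:ℝ)) ≤ 1/8 := by
        rw [div_le_div_iff₀ (by positivity) (by norm_num : (0:ℝ) < 8)]
        linarith only [hT2]
      have hc4 : 1/(4*κm) ≤ 1/4 := by
        rw [div_le_div_iff₀ (by positivity) (by norm_num : (0:ℝ) < 4)]
        linarith only [hκm]
      have hcoef : (x-1) * (1/(4*x^2) + 1/(8*x*lg)) + 1/(4*(T:ℝ)) ≤ 1 - 1/(4*κm) := by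
        have hsum : (x-1) * (1/(4*x^2) + 1/(8*x*lg))
            = (x-1) * (1/(4*x^2)) + (x-1) * (1/(8*x*lg)) := by ring
        rw [hsum]
        linarith only [hc1, hc2, hc3, hc4]
      have hrhs : (x - 1) * (1/(4*x^2) * B + 1/(8*x*lg) * B) + 1/(4*T) * B
          ≤ (1 - 1/(4*κm)) * B := by
        have h10 := mul_le_mul_of_nonneg_right hcoef hB0
        linarith only [h10]
      linarith only [h, t1, t2, hrhs]
  exact max_le haT hbT
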